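/- The utility-based acceptability index α satisfies quasi-concavity: for X, Y ∈ L^∞ and λ ∈ [0,1], α(λX + (1-λ)Y) ≥ min(α(X), α(Y)). -/

import Mathlib

open MeasureTheory ENNReal

/-- `μ_γ(X) = -(1/γ) U⁻¹(E[U(γX)])`. -/
noncomputable def mu {Ω : Type*} [MeasurableSpace Ω] (P : Measure Ω)
    (U : ℝ → ℝ) (γ : ℝ) (X : Ω → ℝ) : ℝ :=
  -(1 / γ) * Function.invFun U (∫ ω, U (γ * X ω) ∂P)

/-- Utility-based acceptability index `α(X) = sup {γ > 0 : μ_γ(X) ≤ 0}`,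
with values in `[0, ∞]` and `sup ∅ = 0`. -/
noncomputable def alpha {Ω : Type*} [MeasurableSpace Ω] (P : Measure Ω)
    (U : ℝ → ℝ) (X : Ω → ℝ) : ℝ≥0∞ :=
  ⨆ γ ∈ {γ : ℝ | 0 < γ ∧ mu P U γ X ≤ 0}, ENNReal.ofReal γ

/-- From `Memℒp X ⊤` get a nonnegative a.e. bound. -/
lemma exists_ae_abs_le {Ω : Type*} [MeasurableSpace Ω] {P : Measure Ω} {X : Ω → ℝ}
    (hX : MemLp X ⊤ P) : ∃ M : ℝ, 0 ≤ M ∧ ∀ᵐ ω ∂P, |X ω| ≤ M := by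
  have h := hX.2
  rw [eLpNorm_exponent_top] at h
  refine ⟨(eLpNormEssSup X P).toReal, ENNReal.toReal_nonneg, ?_⟩
  filter_upwards [ae_le_eLpNormEssSup (f := X) (μ := P)] with ω hω
  have : (‖X ω‖₊ : ℝ≥0∞).toReal ≤ (eLpNormEssSup X P).toReal :=
    ENNReal.toReal_mono h.ne hω
  simpa [Real.norm_eq_abs] using this

/-- Integrability of `U ∘ (γ • X)` for essentially bounded `X`. -/
lemma integrable_U_comp {Ω : Type*} [MeasurableSpace Ω] {P : Measure Ω}
    [IsProbabilityMeasure P] {U : ℝ → ℝ} (hcont : Continuous U) (hmono : StrictMono U)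
    {X : Ω → ℝ} (hXm : AEStronglyMeasurable X P) {γ M : ℝ}
    (hM : ∀ᵐ ω ∂P, |X ω| ≤ M) (hγ : 0 < γ) :
    Integrable (fun ω => U (γ * X ω)) P := by
  refine ⟨hcont.comp_aestronglyMeasurable (hXm.const_mul γ), ?_⟩
  refine HasFiniteIntegral.of_bounded (C := max |U (-(γ * M))| |U (γ * M)|) ?_
  filter_upwards [hM] with ω hω
  have h1 : γ * X ω ≤ γ * M := by
    have := (abs_le.1 hω).2
    nlinarith
  have h2 : -(γ * M) ≤ γ * X ω := by
    have := (abs_le.1 hω).1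
    nlinarith
  have hu1 : U (γ * X ω) ≤ U (γ * M) := hmono.monotone h1
  have hu2 : U (-(γ * M)) ≤ U (γ * X ω) := hmono.monotone h2
  rw [Real.norm_eq_abs]
  rcases abs_cases (U (γ * X ω)) with ⟨he, _⟩ | ⟨he, _⟩ <;> rw [he]
  · exact le_max_of_le_right (le_abs_self _ |>.trans' hu1)
  · exact le_max_of_le_left ((neg_le_neg hu2).trans (neg_le_abs _))

/-- Key lemma: if `μ_γ(X) ≤ 0` and `μ_γ(Y) ≤ 0` then `μ_γ(λX+(1-λ)Y) ≤ 0`. -/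
lemma mu_convex_le_zero {Ω : Type*} [MeasurableSpace Ω] (P : Measure Ω)
    [IsProbabilityMeasure P] (U : ℝ → ℝ)
    (hC2 : ContDiff ℝ 2 U) (hconc : ConcaveOn ℝ Set.univ U) (hmono : StrictMono U)
    (X Y : Ω → ℝ) (hX : MemLp X ⊤ P) (hY : MemLp Y ⊤ P)
    (lam : ℝ) (hlam : lam ∈ Set.Icc (0 : ℝ) 1) {γ : ℝ} (hγ : 0 < γ)
    (hmuX : mu P U γ X ≤ 0) (hmuY : mu P U γ Y ≤ 0) :
    mu P U γ (fun ω => lam * X ω + (1 - lam) * Y ω) ≤ 0 := by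
  obtain ⟨hl0, hl1⟩ := hlam
  have hl1' : 0 ≤ 1 - lam := by linarith
  have hcont := hC2.continuous
  obtain ⟨MX, hMX0, hMX⟩ := exists_ae_abs_le hX
  obtain ⟨MY, hMY0, hMY⟩ := exists_ae_abs_le hY
  have hIX : Integrable (fun ω => U (γ * X ω)) P :=
    integrable_U_comp hcont hmono hX.aestronglyMeasurable hMX hγ
  have hIY : Integrable (fun ω => U (γ * Y ω)) P :=
    integrable_U_comp hcont hmono hY.aestronglyMeasurable hMY hγ
  set Z : Ω → ℝ := fun ω => lam * X ω + (1 - lam) * Y ω with hZdef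
  have hZm : AEStronglyMeasurable Z P :=
    (hX.aestronglyMeasurable.const_mul lam).add (hY.aestronglyMeasurable.const_mul (1 - lam))
  have hMZ : ∀ᵐ ω ∂P, |Z ω| ≤ MX + MY := by
    filter_upwards [hMX, hMY] with ω h1 h2
    have : |Z ω| ≤ lam * |X ω| + (1 - lam) * |Y ω| := by
      refine (abs_add_le _ _).trans ?_
      gcongr <;> simp [abs_mul, abs_of_nonneg, hl0, hl1']
    nlinarith [abs_nonneg (X ω), abs_nonneg (Y ω)]
  have hIZ : Integrable (fun ω => U (γ * Z ω)) P :=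
    integrable_U_comp hcont hmono hZm hMZ hγ
  -- From `μ_γ(X) ≤ 0` deduce `∫ U(γX) ≥ U 0`.
  have key : ∀ (W : Ω → ℝ) (MW : ℝ), 0 ≤ MW → (∀ᵐ ω ∂P, |W ω| ≤ MW) →
      Integrable (fun ω => U (γ * W ω)) P → mu P U γ W ≤ 0 →
      U 0 ≤ ∫ ω, U (γ * W ω) ∂P := by
    intro W MW hMW0 hMW hIW hmuW
    -- the integral lies in the range of U
    have hub : (∫ ω, U (γ * W ω) ∂P) ≤ U (γ * MW) := by
      have : (∫ ω, U (γ * W ω) ∂P) ≤ ∫ _, U (γ * MW) ∂P := by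
        refine integral_mono_ae hIW (integrable_const _) ?_
        filter_upwards [hMW] with ω hω
        refine hmono.monotone ?_
        have := (abs_le.1 hω).2
        nlinarith
      simpa using this
    have hlb : U (-(γ * MW)) ≤ ∫ ω, U (γ * W ω) ∂P := by
      have : (∫ _, U (-(γ * MW)) ∂P) ≤ ∫ ω, U (γ * W ω) ∂P := by
        refine integral_mono_ae (integrable_const _) hIW ?_
        filter_upwards [hMW] with ω hω
        refine hmono.monotone ?_
        have := (abs_le.1 hω).1
        nlinarith
      simpa using this
    have hrange : (∫ ω, U (γ * W ω) ∂P) ∈ Set.range U := by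
      have hle : -(γ * MW) ≤ γ * MW := by nlinarith
      have := intermediate_value_Icc hle hcont.continuousOn
      obtain ⟨t, _, ht⟩ := this ⟨hlb, hub⟩
      exact ⟨t, ht⟩
    have hinv : U (Function.invFun U (∫ ω, U (γ * W ω) ∂P)) = ∫ ω, U (γ * W ω) ∂P :=
      Function.invFun_eq hrange
    have hnn : 0 ≤ Function.invFun U (∫ ω, U (γ * W ω) ∂P) := by
      unfold mu at hmuW
      have hγ' : 0 < 1 / γ := by positivity
      nlinarith
    calc U 0 ≤ U (Function.invFun U (∫ ω, U (γ * W ω) ∂P)) := hmono.monotone hnn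
      _ = _ := hinv
  have hX0 : U 0 ≤ ∫ ω, U (γ * X ω) ∂P := key X MX hMX0 hMX hIX hmuX
  have hY0 : U 0 ≤ ∫ ω, U (γ * Y ω) ∂P := key Y MY hMY0 hMY hIY hmuY
  -- concavity: pointwise  lam * U(γX) + (1-lam) * U(γY) ≤ U(γZ)
  have hpt : ∀ ω, lam * U (γ * X ω) + (1 - lam) * U (γ * Y ω) ≤ U (γ * Z ω) := by
    intro ω
    have := hconc.2 (Set.mem_univ (γ * X ω)) (Set.mem_univ (γ * Y ω)) hl0 hl1' (by ring)
    simpa [hZdef, smul_eq_mul, mul_add, mul_comm, mul_left_comm, mul_assoc] using this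
  have hZint : U 0 ≤ ∫ ω, U (γ * Z ω) ∂P := by
    have h1 : (∫ ω, (lam * U (γ * X ω) + (1 - lam) * U (γ * Y ω)) ∂P)
        ≤ ∫ ω, U (γ * Z ω) ∂P := by
      refine integral_mono_ae ((hIX.const_mul lam).add (hIY.const_mul (1 - lam))) hIZ ?_
      exact Filter.Eventually.of_forall hpt
    have h2 : (∫ ω, (lam * U (γ * X ω) + (1 - lam) * U (γ * Y ω)) ∂P)
        = lam * ∫ ω, U (γ * X ω) ∂P + (1 - lam) * ∫ ω, U (γ * Y ω) ∂P := by
      rw [integral_add (hIX.const_mul lam) (hIY.const_mul (1 - lam)),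
        integral_const_mul, integral_const_mul]
    nlinarith
  -- conclude: the integral for Z is in the range with a nonnegative preimage
  have hMZ0 : 0 ≤ MX + MY := by linarith
  have hub : (∫ ω, U (γ * Z ω) ∂P) ≤ U (γ * (MX + MY)) := by
    have : (∫ ω, U (γ * Z ω) ∂P) ≤ ∫ _, U (γ * (MX + MY)) ∂P := by
      refine integral_mono_ae hIZ (integrable_const _) ?_
      filter_upwards [hMZ] with ω hω
      refine hmono.monotone ?_
      have := (abs_le.1 hω).2
      nlinarith
    simpa using this
  have hle : (0 : ℝ) ≤ γ * (MX + MY) := by positivity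
  obtain ⟨t, ⟨ht0, _⟩, ht⟩ := intermediate_value_Icc hle hcont.continuousOn
    ⟨by simpa using hZint, hub⟩
  have hinv : Function.invFun U (∫ ω, U (γ * Z ω) ∂P) = t := by
    rw [← ht]; exact Function.leftInverse_invFun hmono.injective t
  unfold mu
  rw [hinv]
  have hγ' : 0 < 1 / γ := by positivity
  nlinarith

theorem alpha_quasiConcave {Ω : Type*} [MeasurableSpace Ω] (P : Measure Ω)
    [IsProbabilityMeasure P] (U : ℝ → ℝ)
    (hC2 : ContDiff ℝ 2 U) (hconc : ConcaveOn ℝ Set.univ U)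
    (hmono : StrictMono U) (hbdd : BddAbove (Set.range U))
    (hreg : ∀ (X : Ω → ℝ), MemLp X ⊤ P → ∀ γ₁ γ₂ : ℝ, 0 < γ₁ → γ₁ ≤ γ₂ →
      mu P U γ₁ X ≤ mu P U γ₂ X)
    (X Y : Ω → ℝ) (hX : MemLp X ⊤ P) (hY : MemLp Y ⊤ P)
    (lam : ℝ) (hlam : lam ∈ Set.Icc (0 : ℝ) 1) :
    min (alpha P U X) (alpha P U Y) ≤
      alpha P U (fun ω => lam * X ω + (1 - lam) * Y ω) := by
  refine ENNReal.le_of_forall_nnreal_lt fun r hr => ?_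
  obtain ⟨hrX, hrY⟩ := lt_min_iff.1 hr
  rw [alpha, lt_iSup_iff] at hrX hrY
  obtain ⟨γ₁, hγ₁⟩ := hrX
  obtain ⟨γ₂, hγ₂⟩ := hrY
  rw [lt_iSup_iff] at hγ₁ hγ₂
  obtain ⟨⟨hγ₁pos, hγ₁mu⟩, hγ₁r⟩ := hγ₁
  obtain ⟨⟨hγ₂pos, hγ₂mu⟩, hγ₂r⟩ := hγ₂
  set γ := min γ₁ γ₂ with hγdef
  have hγpos : 0 < γ := lt_min hγ₁pos hγ₂pos
  have hmuX : mu P U γ X ≤ 0 := (hreg X hX γ γ₁ hγpos (min_le_left _ _)).trans hγ₁mu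
  have hmuY : mu P U γ Y ≤ 0 := (hreg Y hY γ γ₂ hγpos (min_le_right _ _)).trans hγ₂mu
  have hmuZ := mu_convex_le_zero P U hC2 hconc hmono X Y hX hY lam hlam hγpos hmuX hmuY
  have hmem : γ ∈ {γ : ℝ | 0 < γ ∧ mu P U γ (fun ω => lam * X ω + (1 - lam) * Y ω) ≤ 0} :=
    ⟨hγpos, hmuZ⟩
  have hle : (r : ℝ≥0∞) ≤ ENNReal.ofReal γ := by
    have := le_min hγ₁r.le hγ₂r.le
    rwa [← Monotone.map_min (fun _ _ h => ENNReal.ofReal_le_ofReal h)] at this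
  calc (r : ℝ≥0∞) ≤ ENNReal.ofReal γ := hle
    _ ≤ _ := le_iSup₂ (f := fun γ (_ : γ ∈ _) => ENNReal.ofReal γ) γ hmem
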